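/- (Removing a vertex.) Let G be a finite simple graph, v a vertex of G, and G' = G − v the induced subgraph obtained by deleting v and all edges incident to v. Let τ be a set of edges of G, let σ be the set of edges of τ not containing v, and write the edges of τ containing v as vw_1, …, vw_t with w_1, …, w_t ∈ N_G(v) distinct (t ≥ 0). Then τ is a Scarf face of I(G) if and only if: (1) σ is a Scarf face of I(G'); and (2) either (a) dist_G(σ, vw_i) ≥ 2 for all 1 ≤ i ≤ t and w_i w_j ∉ E(G) for all 1 ≤ i < j ≤ t; or (b) t = 1, dist_G(σ, vw_1) = 0, N_σ(w_1) ∩ N_G(v) = ∅, and dist_G(e, vw_1) ≠ 1 for all e ∈ σ. -/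

import Mathlib

/-- The monomial (exponent vector) of an edge: `1` on its endpoints, `0` elsewhere. -/
def edgeMon {V : Type*} [DecidableEq V] (e : Sym2 V) : V → ℕ :=
  fun x => if x ∈ e then 1 else 0

/-- The lcm (componentwise max) of the monomials of a finite set of edges. -/
def eLcm {V : Type*} [DecidableEq V] (σ : Finset (Sym2 V)) : V → ℕ :=
  σ.sup edgeMon

/-- `σ` is a Scarf face of the edge ideal `I(G)`, identified with a set of edges of `G`:
its lcm is distinct from the lcm of any other set of edges of `G`. -/
def IsScarf {V : Type*} [DecidableEq V] (G : SimpleGraph V) (σ : Finset (Sym2 V)) : Prop :=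
  (∀ e ∈ σ, e ∈ G.edgeSet) ∧
    ∀ τ : Finset (Sym2 V), (∀ e ∈ τ, e ∈ G.edgeSet) → eLcm τ = eLcm σ → τ = σ

/-- `dist_G(e, f) = 0`: the two edges share a vertex. -/
def Dist0 {V : Type*} (e f : Sym2 V) : Prop := ∃ x, x ∈ e ∧ x ∈ f

/-- `dist_G(e, f) = 1`: the edges are vertex-disjoint, but some endpoint of `e` is
adjacent in `G` to some endpoint of `f`. -/
def Dist1 {V : Type*} (G : SimpleGraph V) (e f : Sym2 V) : Prop :=
  ¬ Dist0 e f ∧ ∃ x ∈ e, ∃ y ∈ f, G.Adj x y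

/-- The graph `G - v`: delete the vertex `v`, i.e. all edges incident to `v`
(keeping the vertex set). -/
def delVert {V : Type*} (G : SimpleGraph V) (v : V) : SimpleGraph V where
  Adj x y := G.Adj x y ∧ x ≠ v ∧ y ≠ v
  symm := ⟨fun x y h => ⟨h.1.symm, h.2.2, h.2.1⟩⟩
  loopless := ⟨fun x h => G.irrefl h.1⟩

section ScarfAux
variable {V : Type*} [DecidableEq V]

lemma eLcm_apply (σ : Finset (Sym2 V)) (x : V) :
    eLcm σ x = if ∃ e ∈ σ, x ∈ e then 1 else 0 := by
  classical
  rw [eLcm, Finset.sup_apply]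
  split_ifs with h
  · obtain ⟨e, he, hx⟩ := h
    refine le_antisymm (Finset.sup_le fun f _ => ?_) ?_
    · simp only [edgeMon]; split_ifs <;> omega
    · have := Finset.le_sup (f := fun e => edgeMon e x) he
      simpa [edgeMon, hx] using this
  · refine le_antisymm (Finset.sup_le fun f hf => ?_) (Nat.zero_le _)
    simp only [edgeMon]
    split_ifs with hx
    · exact absurd ⟨f, hf, hx⟩ h
    · exact le_refl 0

lemma eLcm_eq_iff (τ σ : Finset (Sym2 V)) :
    eLcm τ = eLcm σ ↔ ∀ x : V, (∃ e ∈ τ, x ∈ e) ↔ (∃ e ∈ σ, x ∈ e) := by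
  classical
  constructor
  · intro h x
    have h2 := congrFun h x
    rw [eLcm_apply, eLcm_apply] at h2
    by_cases h1 : ∃ e ∈ τ, x ∈ e <;> by_cases h3 : ∃ e ∈ σ, x ∈ e <;>
      simp [h1, h3] at h2 ⊢
  · intro h; funext x; rw [eLcm_apply, eLcm_apply, if_congr (h x) rfl rfl]

lemma isScarf_iff {G : SimpleGraph V} {σ : Finset (Sym2 V)} :
    IsScarf G σ ↔ ((∀ e ∈ σ, e ∈ G.edgeSet) ∧
      (∀ e ∈ G.edgeSet, (∀ x ∈ e, ∃ f ∈ σ, x ∈ f) → e ∈ σ) ∧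
      (∀ e ∈ σ, ∃ x ∈ e, ∀ f ∈ σ, x ∈ f → f = e)) := by
  classical
  constructor
  · rintro ⟨hE, huniq⟩
    refine ⟨hE, ?_, ?_⟩
    · intro e he hcov
      have h1 : ∀ f ∈ insert e σ, f ∈ G.edgeSet := by
        intro f hf; rcases Finset.mem_insert.mp hf with rfl | hf
        · exact he
        · exact hE f hf
      have h2 : eLcm (insert e σ) = eLcm σ := by
        rw [eLcm_eq_iff]
        intro x
        constructor
        · rintro ⟨f, hf, hx⟩
          rcases Finset.mem_insert.mp hf with rfl | hf
          · exact hcov x hx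
          · exact ⟨f, hf, hx⟩
        · rintro ⟨f, hf, hx⟩; exact ⟨f, Finset.mem_insert_of_mem hf, hx⟩
      have := huniq _ h1 h2
      exact Finset.insert_eq_self.mp this
    · intro e he
      by_contra hcon
      push_neg at hcon
      have h1 : ∀ f ∈ σ.erase e, f ∈ G.edgeSet := fun f hf => hE f (Finset.mem_of_mem_erase hf)
      have h2 : eLcm (σ.erase e) = eLcm σ := by
        rw [eLcm_eq_iff]
        intro x
        constructor
        · rintro ⟨f, hf, hx⟩; exact ⟨f, Finset.mem_of_mem_erase hf, hx⟩
        · rintro ⟨f, hf, hx⟩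
          by_cases hfe : f = e
          · subst hfe
            obtain ⟨g, hg, hxg, hge⟩ := hcon x hx
            exact ⟨g, Finset.mem_erase.mpr ⟨hge, hg⟩, hxg⟩
          · exact ⟨f, Finset.mem_erase.mpr ⟨hfe, hf⟩, hx⟩
      have h3 := huniq _ h1 h2
      have h4 : e ∈ σ.erase e := by rw [h3]; exact he
      exact (Finset.notMem_erase e σ) h4
  · rintro ⟨hE, hClosed, hPriv⟩
    refine ⟨hE, fun τ hτE hlcm => ?_⟩
    have hsupp := (eLcm_eq_iff τ σ).mp hlcm
    have hsub : τ ⊆ σ := by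
      intro f hf
      exact hClosed f (hτE f hf) (fun x hx => (hsupp x).mp ⟨f, hf, hx⟩)
    refine Finset.Subset.antisymm hsub (fun e he => ?_)
    obtain ⟨x, hx, hpriv⟩ := hPriv e he
    obtain ⟨f, hf, hxf⟩ := (hsupp x).mpr ⟨e, he, hx⟩
    have := hpriv f (hsub hf) hxf
    exact this ▸ hf

lemma delVert_edgeSet {G : SimpleGraph V} {v : V} {e : Sym2 V} :
    e ∈ (delVert G v).edgeSet ↔ e ∈ G.edgeSet ∧ v ∉ e := by
  induction e using Sym2.ind with
  | _ a b =>
    simp only [SimpleGraph.mem_edgeSet, Sym2.mem_iff, delVert]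
    constructor
    · rintro ⟨h, ha, hb⟩
      exact ⟨h, by rintro (rfl | rfl) <;> simp_all⟩
    · rintro ⟨h, hv⟩
      push_neg at hv
      exact ⟨h, Ne.symm hv.1, Ne.symm hv.2⟩

end ScarfAux

theorem stmt10 {V : Type*} [Fintype V] [DecidableEq V] (G : SimpleGraph V) (v : V)
    (σ : Finset (Sym2 V)) (hσE : ∀ e ∈ σ, e ∈ (delVert G v).edgeSet)
    (W : Finset V) (hW : ∀ w ∈ W, G.Adj v w) :
    IsScarf G (σ ∪ W.image (fun w => s(v, w))) ↔
      (IsScarf (delVert G v) σ ∧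
        (((∀ w ∈ W, ∀ e ∈ σ, ¬ Dist0 e s(v, w) ∧ ¬ Dist1 G e s(v, w)) ∧
            (∀ w ∈ W, ∀ w' ∈ W, w ≠ w' → ¬ G.Adj w w')) ∨
          (∃ w, W = {w} ∧ (∃ e ∈ σ, Dist0 e s(v, w)) ∧
            {x : V | s(x, w) ∈ σ} ∩ G.neighborSet v = ∅ ∧
            ∀ e ∈ σ, ¬ Dist1 G e s(v, w)))) := by
  classical
  set τ : Finset (Sym2 V) := σ ∪ W.image (fun w => s(v, w)) with hτdef
  have hvσ : ∀ e ∈ σ, v ∉ e := fun e he => (delVert_edgeSet.mp (hσE e he)).2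
  have hσG : ∀ e ∈ σ, e ∈ G.edgeSet := fun e he => (delVert_edgeSet.mp (hσE e he)).1
  have hmemτ : ∀ f, f ∈ τ ↔ f ∈ σ ∨ ∃ w ∈ W, s(v, w) = f := by
    intro f
    simp [hτdef, Finset.mem_union, Finset.mem_image]
  have hτsub : σ ⊆ τ := Finset.subset_union_left
  have hvwτ : ∀ w ∈ W, s(v, w) ∈ τ := fun w hw => (hmemτ _).mpr (Or.inr ⟨w, hw, rfl⟩)
  have hWv : ∀ w ∈ W, w ≠ v := fun w hw => (hW w hw).ne'
  rw [isScarf_iff, isScarf_iff]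
  constructor
  · rintro ⟨hE, hClosed, hPriv⟩
    have hτ_not_v : ∀ f ∈ τ, v ∉ f → f ∈ σ := by
      intro f hf hv
      rcases (hmemτ f).mp hf with h | ⟨w, hw, rfl⟩
      · exact h
      · exact absurd (Sym2.mem_mk_left v w) hv
    refine ⟨⟨hσE, ?_, ?_⟩, ?_⟩
    · intro e he hcov
      have he' := delVert_edgeSet.mp he
      have hmem : e ∈ τ := by
        apply hClosed e he'.1
        intro x hx
        obtain ⟨f, hf, hxf⟩ := hcov x hx
        exact ⟨f, hτsub hf, hxf⟩
      exact hτ_not_v e hmem he'.2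
    · intro e he
      obtain ⟨x, hx, hp⟩ := hPriv e (hτsub he)
      exact ⟨x, hx, fun f hf => hp f (hτsub hf)⟩
    · by_cases hWS : ∀ w ∈ W, ∀ e ∈ σ, w ∉ e
      · left
        constructor
        · intro w hw e he
          have hvne : v ∉ e := hvσ e he
          constructor
          · rintro ⟨x, hxe, hxvw⟩
            rcases Sym2.mem_iff.mp hxvw with rfl | rfl
            · exact hvne hxe
            · exact hWS x hw e he hxe
          · rintro ⟨-, x, hxe, y, hyvw, hadj⟩
            have hxv : x ≠ v := fun h => hvne (h ▸ hxe)
            rcases Sym2.mem_iff.mp hyvw with h0 | h0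
            · -- y = v
              rw [h0] at hadj
              have hmem : s(x, v) ∈ τ := by
                apply hClosed _ ((SimpleGraph.mem_edgeSet G).mpr hadj)
                intro z hz
                rcases Sym2.mem_iff.mp hz with h2 | h2
                · exact ⟨e, hτsub he, by rw [h2]; exact hxe⟩
                · exact ⟨s(v, w), hvwτ w hw, by rw [h2]; exact Sym2.mem_mk_left v w⟩
              rcases (hmemτ _).mp hmem with h | ⟨w', hw', heq⟩
              · exact hvσ _ h (Sym2.mem_mk_right x v)
              · have hxm : x ∈ s(v, w') := by rw [heq]; exact Sym2.mem_mk_left x v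
                rcases Sym2.mem_iff.mp hxm with h' | h'
                · exact hxv h'
                · exact hWS w' hw' e he (h' ▸ hxe)
            · -- y = w
              rw [h0] at hadj
              have hmem : s(x, w) ∈ τ := by
                apply hClosed _ ((SimpleGraph.mem_edgeSet G).mpr hadj)
                intro z hz
                rcases Sym2.mem_iff.mp hz with h2 | h2
                · exact ⟨e, hτsub he, by rw [h2]; exact hxe⟩
                · exact ⟨s(v, w), hvwτ w hw, by rw [h2]; exact Sym2.mem_mk_right v w⟩
              rcases (hmemτ _).mp hmem with h | ⟨w', hw', heq⟩
              · exact hWS w hw _ h (Sym2.mem_mk_right x w)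
              · have hvm : v ∈ s(x, w) := by rw [← heq]; exact Sym2.mem_mk_left v w'
                rcases Sym2.mem_iff.mp hvm with h' | h'
                · exact hxv h'.symm
                · exact hWv w hw h'.symm
        · intro w hw w' hw' hne hadj
          have hmem : s(w, w') ∈ τ := by
            apply hClosed _ ((SimpleGraph.mem_edgeSet G).mpr hadj)
            intro z hz
            rcases Sym2.mem_iff.mp hz with h2 | h2
            · exact ⟨s(v, w), hvwτ w hw, by rw [h2]; exact Sym2.mem_mk_right v w⟩
            · exact ⟨s(v, w'), hvwτ w' hw', by rw [h2]; exact Sym2.mem_mk_right v w'⟩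
          rcases (hmemτ _).mp hmem with h | ⟨w'', hw'', heq⟩
          · exact hWS w hw _ h (Sym2.mem_mk_left w w')
          · have hvm : v ∈ s(w, w') := by rw [← heq]; exact Sym2.mem_mk_left v w''
            rcases Sym2.mem_iff.mp hvm with h' | h'
            · exact hWv w hw h'.symm
            · exact hWv w' hw' h'.symm
      · right
        push_neg at hWS
        obtain ⟨w₀, hw₀, e₀, he₀, hw₀e₀⟩ := hWS
        have hWsing : W = {w₀} := by
          obtain ⟨x, hx, hp⟩ := hPriv s(v, w₀) (hvwτ w₀ hw₀)
          have hxv : x = v := by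
            rcases Sym2.mem_iff.mp hx with h | h
            · exact h
            · exfalso
              have heq := hp e₀ (hτsub he₀) (h ▸ hw₀e₀)
              exact hvσ e₀ he₀ (by rw [heq]; exact Sym2.mem_mk_left v w₀)
          rw [hxv] at hp
          refine Finset.eq_singleton_iff_unique_mem.mpr ⟨hw₀, fun w' hw' => ?_⟩
          exact Sym2.congr_right.mp (hp s(v, w') (hvwτ w' hw') (Sym2.mem_mk_left v w'))
        have hWmem : ∀ w ∈ W, w = w₀ := by
          intro w hw; rw [hWsing] at hw; exact Finset.mem_singleton.mp hw
        refine ⟨w₀, hWsing, ⟨e₀, he₀, ⟨w₀, hw₀e₀, Sym2.mem_mk_right v w₀⟩⟩, ?_, ?_⟩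
        · ext x
          simp only [Set.mem_inter_iff, Set.mem_setOf_eq, SimpleGraph.mem_neighborSet,
            Set.mem_empty_iff_false, iff_false, not_and]
          intro hxσ hxadj
          have hmem : s(v, x) ∈ τ := by
            apply hClosed _ ((SimpleGraph.mem_edgeSet G).mpr hxadj)
            intro z hz
            rcases Sym2.mem_iff.mp hz with h2 | h2
            · exact ⟨s(v, w₀), hvwτ w₀ hw₀, by rw [h2]; exact Sym2.mem_mk_left v w₀⟩
            · exact ⟨s(x, w₀), hτsub hxσ, by rw [h2]; exact Sym2.mem_mk_left x w₀⟩
          rcases (hmemτ _).mp hmem with h | ⟨w', hw', heq⟩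
          · exact hvσ _ h (Sym2.mem_mk_left v x)
          · have hxw₀ : x = w₀ := ((Sym2.congr_right.mp heq).symm).trans (hWmem w' hw')
            rw [hxw₀] at hxσ
            exact (delVert G v).irrefl ((SimpleGraph.mem_edgeSet (delVert G v)).mp (hσE _ hxσ))
        · intro e he
          rintro ⟨hnd0, x, hxe, y, hy, hadj⟩
          have hxv : x ≠ v := fun h => hvσ e he (h ▸ hxe)
          have hw₀e : w₀ ∉ e := fun h => hnd0 ⟨w₀, h, Sym2.mem_mk_right v w₀⟩
          rcases Sym2.mem_iff.mp hy with h0 | h0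
          · -- y = v
            rw [h0] at hadj
            have hmem : s(x, v) ∈ τ := by
              apply hClosed _ ((SimpleGraph.mem_edgeSet G).mpr hadj)
              intro z hz
              rcases Sym2.mem_iff.mp hz with h2 | h2
              · exact ⟨e, hτsub he, by rw [h2]; exact hxe⟩
              · exact ⟨s(v, w₀), hvwτ w₀ hw₀, by rw [h2]; exact Sym2.mem_mk_left v w₀⟩
            rcases (hmemτ _).mp hmem with h | ⟨w', hw', heq⟩
            · exact hvσ _ h (Sym2.mem_mk_right x v)
            · have hxm : x ∈ s(v, w') := by rw [heq]; exact Sym2.mem_mk_left x v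
              rcases Sym2.mem_iff.mp hxm with h' | h'
              · exact hxv h'
              · have hxw₀ : x = w₀ := h'.trans (hWmem w' hw')
                exact hnd0 ⟨w₀, hxw₀ ▸ hxe, Sym2.mem_mk_right v w₀⟩
          · -- y = w₀
            rw [h0] at hadj
            have hmem : s(x, w₀) ∈ τ := by
              apply hClosed _ ((SimpleGraph.mem_edgeSet G).mpr hadj)
              intro z hz
              rcases Sym2.mem_iff.mp hz with h2 | h2
              · exact ⟨e, hτsub he, by rw [h2]; exact hxe⟩
              · exact ⟨s(v, w₀), hvwτ w₀ hw₀, by rw [h2]; exact Sym2.mem_mk_right v w₀⟩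
            obtain ⟨p, hp, hpriv⟩ := hPriv _ hmem
            rcases Sym2.mem_iff.mp hp with h1 | h1
            · rw [h1] at hpriv
              have heq := hpriv e (hτsub he) hxe
              exact hw₀e (by rw [heq]; exact Sym2.mem_mk_right x w₀)
            · rw [h1] at hpriv
              have heq := hpriv s(v, w₀) (hvwτ w₀ hw₀) (Sym2.mem_mk_right v w₀)
              have hvm : v ∈ s(x, w₀) := by rw [← heq]; exact Sym2.mem_mk_left v w₀
              rcases Sym2.mem_iff.mp hvm with h' | h'
              · exact hxv h'.symm
              · exact hWv w₀ hw₀ h'.symm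
  · rintro ⟨⟨hσE', hσClosed, hσPriv⟩, hab⟩
    have hEdges : ∀ f ∈ τ, f ∈ G.edgeSet := by
      intro f hf
      rcases (hmemτ f).mp hf with h | ⟨w, hw, heq⟩
      · exact hσG f h
      · rw [← heq]; exact (SimpleGraph.mem_edgeSet G).mpr (hW w hw)
    have hclass : ∀ x, (∃ f ∈ τ, x ∈ f) → (∃ g ∈ σ, x ∈ g) ∨ x ∈ W ∨ (x = v ∧ W.Nonempty) := by
      rintro x ⟨f, hf, hxf⟩
      rcases (hmemτ f).mp hf with h | ⟨w, hw, heq⟩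
      · exact Or.inl ⟨f, h, hxf⟩
      · rw [← heq] at hxf
        rcases Sym2.mem_iff.mp hxf with h' | h'
        · exact Or.inr (Or.inr ⟨h', w, hw⟩)
        · exact Or.inr (Or.inl (h' ▸ hw))
    have hσσ : ∀ a b, s(a, b) ∈ G.edgeSet → (∃ g ∈ σ, a ∈ g) → (∃ g ∈ σ, b ∈ g) →
        s(a, b) ∈ τ := by
      rintro a b he ⟨g, hg, hag⟩ ⟨g', hg', hbg⟩
      have hav : a ≠ v := fun h => hvσ g hg (h ▸ hag)
      have hbv : b ≠ v := fun h => hvσ g' hg' (h ▸ hbg)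
      apply hτsub
      apply hσClosed
      · exact delVert_edgeSet.mpr ⟨he, by
          rw [Sym2.mem_iff]; rintro (h | h)
          exacts [hav h.symm, hbv h.symm]⟩
      · intro z hz
        rcases Sym2.mem_iff.mp hz with h2 | h2
        · exact ⟨g, hg, by rw [h2]; exact hag⟩
        · exact ⟨g', hg', by rw [h2]; exact hbg⟩
    rcases hab with ⟨hd, hind⟩ | ⟨w₀, hWsing, ⟨e₀, he₀, hd0⟩, hNint, hnd1⟩
    · -- case (a)
      have hnd0' : ∀ w ∈ W, ∀ g ∈ σ, ¬ Dist0 g s(v, w) := fun w hw g hg => (hd w hw g hg).1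
      have hWS : ∀ w ∈ W, ∀ g ∈ σ, w ∉ g := by
        intro w hw g hg hmem
        exact hnd0' w hw g hg ⟨w, hmem, Sym2.mem_mk_right v w⟩
      have hnadj : ∀ w ∈ W, ∀ g ∈ σ, ∀ x ∈ g, ¬G.Adj x v ∧ ¬G.Adj x w := by
        intro w hw g hg x hx
        constructor
        · intro hxadj
          exact (hd w hw g hg).2 ⟨hnd0' w hw g hg, x, hx, v, Sym2.mem_mk_left v w, hxadj⟩
        · intro hxadj
          exact (hd w hw g hg).2 ⟨hnd0' w hw g hg, x, hx, w, Sym2.mem_mk_right v w, hxadj⟩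
      refine ⟨hEdges, ?_, ?_⟩
      · -- closedness
        intro e he hcov
        induction e using Sym2.ind with
        | _ a b =>
          have hadj : G.Adj a b := (SimpleGraph.mem_edgeSet G).mp he
          have ha := hclass a (hcov a (Sym2.mem_mk_left a b))
          have hb := hclass b (hcov b (Sym2.mem_mk_right a b))
          rcases ha with hga | haW | hav
          · rcases hb with hgb | hbW | ⟨hbv, ⟨w1, hw1⟩⟩
            · exact hσσ a b he hga hgb
            · obtain ⟨g, hg, hag⟩ := hga
              exact absurd hadj ((hnadj b hbW g hg a hag).2)
            · obtain ⟨g, hg, hag⟩ := hga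
              rw [hbv] at hadj
              exact absurd hadj ((hnadj w1 hw1 g hg a hag).1)
          · rcases hb with hgb | hbW | ⟨hbv, -⟩
            · obtain ⟨g, hg, hbg⟩ := hgb
              exact absurd hadj.symm ((hnadj a haW g hg b hbg).2)
            · exact absurd hadj (hind a haW b hbW hadj.ne)
            · rw [hbv, Sym2.eq_swap]; exact hvwτ a haW
          · rcases hb with hgb | hbW | ⟨hbv, -⟩
            · obtain ⟨w1, hw1⟩ := hav.2
              obtain ⟨g, hg, hbg⟩ := hgb
              rw [hav.1] at hadj
              exact absurd hadj.symm ((hnadj w1 hw1 g hg b hbg).1)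
            · rw [hav.1]; exact hvwτ b hbW
            · rw [hav.1, hbv] at hadj
              exact absurd hadj G.irrefl
      · -- privacy
        intro f hf
        rcases (hmemτ f).mp hf with hfσ | ⟨w, hw, heq⟩
        · obtain ⟨x, hx, hp⟩ := hσPriv f hfσ
          refine ⟨x, hx, fun g hg hxg => ?_⟩
          rcases (hmemτ g).mp hg with h' | ⟨w', hw', heq'⟩
          · exact hp g h' hxg
          · exfalso
            rw [← heq'] at hxg
            rcases Sym2.mem_iff.mp hxg with h2 | h2
            · exact hvσ f hfσ (h2 ▸ hx)
            · exact hWS w' hw' f hfσ (h2 ▸ hx)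
        · refine ⟨w, by rw [← heq]; exact Sym2.mem_mk_right v w, fun g hg hwg => ?_⟩
          rcases (hmemτ g).mp hg with h' | ⟨w', hw', heq'⟩
          · exact absurd hwg (hWS w hw g h')
          · rw [← heq'] at hwg
            rcases Sym2.mem_iff.mp hwg with h2 | h2
            · exact absurd h2 (hWv w hw)
            · rw [← heq', ← heq, h2]
    · -- case (b)
      have hw₀W : w₀ ∈ W := by rw [hWsing]; exact Finset.mem_singleton_self w₀
      have hWmem : ∀ w ∈ W, w = w₀ := by
        intro w hw; rw [hWsing] at hw; exact Finset.mem_singleton.mp hw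
      have hw₀e₀ : w₀ ∈ e₀ := by
        obtain ⟨x, hx, hxm⟩ := hd0
        rcases Sym2.mem_iff.mp hxm with h | h
        · exact absurd (h ▸ hx) (hvσ e₀ he₀)
        · exact h ▸ hx
      have hNint' : ∀ x, s(x, w₀) ∈ σ → ¬ G.Adj v x := by
        intro x hx hadj
        have hmem : x ∈ ({x : V | s(x, w₀) ∈ σ} ∩ G.neighborSet v) := ⟨hx, hadj⟩
        rw [hNint] at hmem
        exact hmem
      have hnd0g : ∀ g ∈ σ, w₀ ∉ g → ¬ Dist0 g s(v, w₀) := by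
        rintro g hg hwg ⟨z, hzg, hzm⟩
        rcases Sym2.mem_iff.mp hzm with h | h
        · exact hvσ g hg (h ▸ hzg)
        · exact hwg (h ▸ hzg)
      have hSN : ∀ x, (∃ g ∈ σ, x ∈ g) → G.Adj v x → x = w₀ := by
        rintro x ⟨g, hg, hxg⟩ hadj
        by_contra hne
        by_cases hwg : w₀ ∈ g
        · have hgeq : g = s(x, w₀) := (Sym2.mem_and_mem_iff hne).mp ⟨hxg, hwg⟩
          exact hNint' x (hgeq ▸ hg) hadj
        · exact hnd1 g hg ⟨hnd0g g hg hwg, x, hxg, v, Sym2.mem_mk_left v w₀, hadj.symm⟩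
      have hno_w_adj : ∀ g ∈ σ, w₀ ∉ g → ∀ x ∈ g, ¬G.Adj x w₀ := by
        intro g hg hwg x hxg hadj
        exact hnd1 g hg ⟨hnd0g g hg hwg, x, hxg, w₀, Sym2.mem_mk_right v w₀, hadj⟩
      refine ⟨hEdges, ?_, ?_⟩
      · -- closedness
        intro e he hcov
        induction e using Sym2.ind with
        | _ a b =>
          have hadj : G.Adj a b := (SimpleGraph.mem_edgeSet G).mp he
          have hcl : ∀ x, (∃ f ∈ τ, x ∈ f) → (∃ g ∈ σ, x ∈ g) ∨ x = v := by
            intro x hx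
            rcases hclass x hx with h | h | ⟨h, -⟩
            · exact Or.inl h
            · exact Or.inl ⟨e₀, he₀, (hWmem x h) ▸ hw₀e₀⟩
            · exact Or.inr h
          have ha := hcl a (hcov a (Sym2.mem_mk_left a b))
          have hb := hcl b (hcov b (Sym2.mem_mk_right a b))
          rcases ha with hga | hav
          · rcases hb with hgb | hbv
            · exact hσσ a b he hga hgb
            · rw [hbv] at hadj
              have : a = w₀ := hSN a hga hadj.symm
              rw [hbv, this, Sym2.eq_swap]
              exact hvwτ w₀ hw₀W
          · rcases hb with hgb | hbv
            · rw [hav] at hadj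
              have : b = w₀ := hSN b hgb hadj
              rw [hav, this]
              exact hvwτ w₀ hw₀W
            · rw [hav, hbv] at hadj
              exact absurd hadj G.irrefl
      · -- privacy
        intro f hf
        rcases (hmemτ f).mp hf with hfσ | ⟨w, hw, heq⟩
        · by_cases hwf : w₀ ∈ f
          · obtain ⟨u, hu⟩ := Sym2.mem_iff_exists.mp hwf
            have hadjd : (delVert G v).Adj w₀ u := by
              have := hσE f hfσ
              rw [hu] at this
              exact (SimpleGraph.mem_edgeSet (delVert G v)).mp this
            have huw : u ≠ w₀ := hadjd.1.ne'
            have huv : u ≠ v := hadjd.2.2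
            refine ⟨u, by rw [hu]; exact Sym2.mem_mk_right w₀ u, fun g hg hug => ?_⟩
            rcases (hmemτ g).mp hg with h' | ⟨w', hw', heq'⟩
            · by_cases hwg : w₀ ∈ g
              · have : g = s(u, w₀) := (Sym2.mem_and_mem_iff huw).mp ⟨hug, hwg⟩
                rw [this, hu, Sym2.eq_swap]
              · exact absurd hadjd.1.symm (hno_w_adj g h' hwg u hug)
            · exfalso
              rw [← heq'] at hug
              rcases Sym2.mem_iff.mp hug with h2 | h2
              · exact huv h2
              · exact huw (h2.trans (hWmem w' hw'))
          · obtain ⟨x, hx, hp⟩ := hσPriv f hfσ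
            refine ⟨x, hx, fun g hg hxg => ?_⟩
            rcases (hmemτ g).mp hg with h' | ⟨w', hw', heq'⟩
            · exact hp g h' hxg
            · exfalso
              rw [← heq'] at hxg
              rcases Sym2.mem_iff.mp hxg with h2 | h2
              · exact hvσ f hfσ (h2 ▸ hx)
              · exact hwf ((h2.trans (hWmem w' hw')) ▸ hx)
        · -- f = s(v,w) with w = w₀
          refine ⟨v, by rw [← heq]; exact Sym2.mem_mk_left v w, fun g hg hvg => ?_⟩
          rcases (hmemτ g).mp hg with h' | ⟨w', hw', heq'⟩
          · exact absurd hvg (hvσ g h')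
          · rw [← heq', ← heq, hWmem w' hw', hWmem w hw]
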